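/- The proportion of ordered pairs (α,β) ∈ C(s,n) × C(s,n) for which the earth mover's distance equals the absolute weighted difference |T(α) − T(β)| equals 2(s+n)/(n(s+1)) − (n-1)!/((s+1)(s+2)⋯(s+n-1)). -/

import Mathlib

/-- `IsComp s n α`: `α` is a weak composition of `s` into `n` parts
(supported on `{0,…,n-1}`). -/
def IsComp (s n : ℕ) (α : ℕ → ℕ) : Prop :=
  (∀ i, n ≤ i → α i = 0) ∧ ∑ i ∈ Finset.range n, α i = s

/-- The word of a composition. -/
def word (n : ℕ) (α : ℕ → ℕ) : List ℕ :=
  ((Finset.range n).sum fun i => Multiset.replicate (α i) i).sort (· ≤ ·)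

/-- The earth mover's distance `EMD(α,β) = ∑_{j=1}^s |w(α)_j − w(β)_j|`. -/
def emd (s n : ℕ) (α β : ℕ → ℕ) : ℕ :=
  ∑ j ∈ Finset.range s, (((word n α).getD j 0 : ℤ) - ((word n β).getD j 0 : ℤ)).natAbs

/-- The weighted total `T(α) = ∑ i·a_i`. -/
def weightedTotal (n : ℕ) (α : ℕ → ℕ) : ℕ :=
  ∑ i ∈ Finset.range n, i * α i

open Finset

/- === getD helpers (part 1) === -/
lemma getD_append_left' {l₁ l₂ : List ℕ} {i : ℕ} (h : i < l₁.length) :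
    (l₁ ++ l₂).getD i 0 = l₁.getD i 0 := by
  simp [List.getD_eq_getElem?_getD, List.getElem?_append_left h]

lemma getD_append_right' {l₁ l₂ : List ℕ} {i : ℕ} (h : l₁.length ≤ i) :
    (l₁ ++ l₂).getD i 0 = l₂.getD (i - l₁.length) 0 := by
  simp [List.getD_eq_getElem?_getD, List.getElem?_append_right h]

lemma getD_take' (l : List ℕ) {k i : ℕ} (h : i < k) :
    (l.take k).getD i 0 = l.getD i 0 := by
  simp [List.getD_eq_getElem?_getD, List.getElem?_take, h]

lemma getD_drop' (l : List ℕ) (k i : ℕ) :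
    (l.drop k).getD i 0 = l.getD (k + i) 0 := by
  simp [List.getD_eq_getElem?_getD, List.getElem?_drop]

lemma getD_of_length_le {l : List ℕ} {i : ℕ} (h : l.length ≤ i) : l.getD i 0 = 0 := by
  simp [List.getD_eq_getElem?_getD, List.getElem?_eq_none h]

lemma sorted_lt_getD_lt {l : List ℕ} (hl : l.Pairwise (· < ·)) {i j : ℕ}
    (hij : i < j) (hj : j < l.length) : l.getD i 0 < l.getD j 0 := by
  rw [List.getD_eq_getElem _ _ (lt_trans hij hj), List.getD_eq_getElem _ _ hj]
  exact List.pairwise_iff_getElem.1 hl i j (lt_trans hij hj) hj hij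

lemma sorted_lt_getD_le {l : List ℕ} (hl : l.Pairwise (· < ·)) {i j : ℕ}
    (hij : i ≤ j) (hj : j < l.length) : l.getD i 0 ≤ l.getD j 0 := by
  rcases eq_or_lt_of_le hij with rfl | h
  · exact le_refl _
  · exact le_of_lt (sorted_lt_getD_lt hl h hj)

lemma list_ext_getD {l₁ l₂ : List ℕ} (hlen : l₁.length = l₂.length)
    (h : ∀ i, l₁.getD i 0 = l₂.getD i 0) : l₁ = l₂ := by
  apply List.ext_getElem hlen
  intro i h1 h2
  have := h i
  rwa [List.getD_eq_getElem _ _ h1, List.getD_eq_getElem _ _ h2] at this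

lemma getD_mem {l : List ℕ} {i : ℕ} (h : i < l.length) : l.getD i 0 ∈ l := by
  rw [List.getD_eq_getElem _ _ h]; exact List.getElem_mem _

lemma sorted_lt_iff_consec {l : List ℕ} :
    l.Pairwise (· < ·) ↔ ∀ i, i + 1 < l.length → l.getD i 0 < l.getD (i+1) 0 := by
  constructor
  · intro h i hi
    exact sorted_lt_getD_lt h (Nat.lt_succ_self i) hi
  · intro h
    rw [← List.isChain_iff_pairwise, List.isChain_iff_getElem]
    intro i hi
    have h1 : i + 1 < l.length := by omega
    have := h i h1
    rw [List.getD_eq_getElem _ _ (by omega), List.getD_eq_getElem _ _ h1] at this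
    simpa [List.get_eq_getElem] using this

/- === Pk === -/
def Pk (m k : ℕ) : Finset (List ℕ) :=
  (Finset.powersetCard k (Finset.range m)).image (fun t => t.sort (· ≤ ·))

lemma sort_toFinset_eq {l : List ℕ} (hl : l.Pairwise (· < ·)) :
    l.toFinset.sort (· ≤ ·) = l := by
  apply List.Perm.eq_of_pairwise' (Finset.pairwise_sort _ _) (hl.imp le_of_lt)
  apply Multiset.coe_eq_coe.mp
  rw [Finset.sort_eq]
  exact (Multiset.dedup_eq_self.2 (Multiset.coe_nodup.mpr hl.nodup))

lemma mem_Pk {m k : ℕ} {l : List ℕ} :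
    l ∈ Pk m k ↔ l.Pairwise (· < ·) ∧ l.length = k ∧ ∀ x ∈ l, x < m := by
  constructor
  · intro hl
    obtain ⟨t, ht, rfl⟩ := Finset.mem_image.1 hl
    rw [Finset.mem_powersetCard] at ht
    refine ⟨List.sortedLT_iff_pairwise.1 (Finset.sortedLT_sort _), ?_, ?_⟩
    · rw [Finset.length_sort]; exact ht.2
    · intro x hx
      exact mem_range.1 (ht.1 ((Finset.mem_sort _).1 hx))
  · rintro ⟨hs, hlen, hb⟩
    apply Finset.mem_image.2
    refine ⟨l.toFinset, ?_, sort_toFinset_eq hs⟩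
    rw [Finset.mem_powersetCard]
    constructor
    · intro x hx; exact mem_range.2 (hb x (List.mem_toFinset.1 hx))
    · rw [← hlen, Finset.card_def]
      change Multiset.card (l : Multiset ℕ).dedup = _
      rw [Multiset.dedup_eq_self.2 (Multiset.coe_nodup.mpr hs.nodup)]
      simp

lemma card_Pk (m k : ℕ) : (Pk m k).card = m.choose k := by
  rw [Pk, Finset.card_image_of_injOn, Finset.card_powersetCard, Finset.card_range]
  intro t1 h1 t2 h2 h
  have h' : t1.sort (· ≤ ·) = t2.sort (· ≤ ·) := h
  apply Finset.ext
  intro x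
  rw [← Finset.mem_sort (α := ℕ) (· ≤ ·), h', Finset.mem_sort]

lemma Pk_getD_lt {m k : ℕ} {l : List ℕ} (hl : l ∈ Pk m k) {i : ℕ} (hi : i < k) :
    l.getD i 0 < m := by
  obtain ⟨hs, hlen, hb⟩ := mem_Pk.1 hl
  exact hb _ (getD_mem (by omega))

/- === Dom === -/
def Dom (x y : List ℕ) : Prop := ∀ i, x.getD i 0 ≤ y.getD i 0

lemma dom_antisymm {x y : List ℕ} (hlen : x.length = y.length)
    (h1 : Dom x y) (h2 : Dom y x) : x = y :=
  list_ext_getD hlen (fun i => le_antisymm (h1 i) (h2 i))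

/- === the reflection maps === -/
open scoped Classical in
noncomputable def Fmap (p : List ℕ × List ℕ) : List ℕ × List ℕ :=
  if h : ∃ i, p.2.getD i 0 < p.1.getD i 0 then
    let j := Nat.find h
    (p.2.take (j+1) ++ p.1.drop j, p.1.take j ++ p.2.drop (j+1))
  else p

open scoped Classical in
noncomputable def Gmap (p : List ℕ × List ℕ) : List ℕ × List ℕ :=
  let j := if h : ∃ i, p.1.getD i 0 < p.2.getD i 0 then Nat.find h else p.1.length - 2
  (p.2.take j ++ p.1.drop (j+1), p.1.take (j+1) ++ p.2.drop j)

section Spec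
open scoped Classical

variable {m s : ℕ}

lemma Fmap_spec {x y : List ℕ} (hs : 1 ≤ s) (hx : x ∈ Pk m s) (hy : y ∈ Pk m s)
    (hnd : ¬ Dom x y) :
    Fmap (x, y) ∈ Pk m (s+1) ×ˢ Pk m (s-1) ∧ Gmap (Fmap (x, y)) = (x, y) := by
  obtain ⟨hxs, hxl, hxb⟩ := mem_Pk.1 hx
  obtain ⟨hys, hyl, hyb⟩ := mem_Pk.1 hy
  have h : ∃ i, y.getD i 0 < x.getD i 0 := by
    unfold Dom at hnd; push_neg at hnd; exact hnd
  have hF : Fmap (x, y) = (y.take (Nat.find h + 1) ++ x.drop (Nat.find h),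
      x.take (Nat.find h) ++ y.drop (Nat.find h + 1)) := by
    rw [Fmap, dif_pos h]
  set j := Nat.find h with hjdef
  have hj : y.getD j 0 < x.getD j 0 := Nat.find_spec h
  have hmin : ∀ i < j, x.getD i 0 ≤ y.getD i 0 := fun i hi => not_lt.1 (Nat.find_min h hi)
  have hjs : j < s := by
    by_contra hc
    rw [getD_of_length_le (l := x) (i := j) (by omega)] at hj
    omega
  set a := y.take (j+1) ++ x.drop j with hadef
  set b := x.take j ++ y.drop (j+1) with hbdef
  have halen : a.length = s + 1 := by
    rw [hadef, List.length_append, List.length_take, List.length_drop, hxl, hyl]; omega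
  have hblen : b.length = s - 1 := by
    rw [hbdef, List.length_append, List.length_take, List.length_drop, hxl, hyl]; omega
  have haD : ∀ i, a.getD i 0 = if i ≤ j then y.getD i 0 else x.getD (i-1) 0 := by
    intro i
    rw [hadef]
    by_cases hij : i ≤ j
    · rw [if_pos hij, getD_append_left' (by rw [List.length_take, hyl]; omega),
        getD_take' _ (by omega)]
    · rw [if_neg hij, getD_append_right' (by rw [List.length_take, hyl]; omega),
        List.length_take, hyl, getD_drop']
      congr 1; omega
  have hbD : ∀ i, b.getD i 0 = if i < j then x.getD i 0 else y.getD (i+1) 0 := by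
    intro i
    rw [hbdef]
    by_cases hij : i < j
    · rw [if_pos hij, getD_append_left' (by rw [List.length_take, hxl]; omega),
        getD_take' _ (by omega)]
    · rw [if_neg hij, getD_append_right' (by rw [List.length_take, hxl]; omega),
        List.length_take, hxl, getD_drop']
      congr 1; omega
  have haPk : a ∈ Pk m (s+1) := by
    rw [mem_Pk]
    refine ⟨?_, halen, ?_⟩
    · rw [sorted_lt_iff_consec]
      intro i hi
      rw [haD, haD, halen] at *
      by_cases h1 : i + 1 ≤ j
      · rw [if_pos (by omega), if_pos h1]
        exact sorted_lt_getD_lt hys (by omega) (by omega)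
      · by_cases h2 : i ≤ j
        · rw [if_pos h2, if_neg h1]
          have : i = j := by omega
          subst this
          simpa using hj
        · rw [if_neg h2, if_neg h1]
          exact sorted_lt_getD_lt hxs (by omega) (by omega)
    · intro z hz
      rcases List.mem_append.1 hz with hz | hz
      · exact hyb z (List.mem_of_mem_take hz)
      · exact hxb z (List.mem_of_mem_drop hz)
  have hbPk : b ∈ Pk m (s-1) := by
    rw [mem_Pk]
    refine ⟨?_, hblen, ?_⟩
    · rw [sorted_lt_iff_consec]
      intro i hi
      rw [hbD, hbD, hblen] at *
      by_cases h1 : i + 1 < j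
      · rw [if_pos (by omega), if_pos h1]
        exact sorted_lt_getD_lt hxs (by omega) (by omega)
      · by_cases h2 : i < j
        · rw [if_pos h2, if_neg h1]
          have : i + 1 = j := by omega
          calc x.getD i 0 ≤ y.getD i 0 := hmin i h2
            _ < y.getD (i+1+1) 0 := sorted_lt_getD_lt hys (by omega) (by omega)
        · rw [if_neg h2, if_neg h1]
          exact sorted_lt_getD_lt hys (by omega) (by omega)
    · intro z hz
      rcases List.mem_append.1 hz with hz | hz
      · exact hxb z (List.mem_of_mem_take hz)
      · exact hyb z (List.mem_of_mem_drop hz)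
  constructor
  · rw [hF]
    exact Finset.mem_product.2 ⟨haPk, hbPk⟩
  · -- Gmap (a, b) = (x, y)
    rw [hF]
    have hgj : (if h' : ∃ i, a.getD i 0 < b.getD i 0 then Nat.find h' else a.length - 2)
        = j := by
      by_cases hjtop : j + 1 < s
      · have h' : ∃ i, a.getD i 0 < b.getD i 0 := by
          refine ⟨j, ?_⟩
          rw [haD, hbD, if_pos (le_refl j), if_neg (lt_irrefl j)]
          exact sorted_lt_getD_lt hys (by omega) (by omega)
        rw [dif_pos h', Nat.find_eq_iff]
        constructor
        · rw [haD, hbD, if_pos (le_refl j), if_neg (lt_irrefl j)]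
          exact sorted_lt_getD_lt hys (by omega) (by omega)
        · intro i hi
          rw [haD, hbD, if_pos (by omega), if_pos hi, not_lt]
          exact hmin i hi
      · have hjeq : j = s - 1 := by omega
        have h' : ¬ ∃ i, a.getD i 0 < b.getD i 0 := by
          rintro ⟨i, hi⟩
          rw [haD, hbD] at hi
          by_cases h2 : i < j
          · rw [if_pos (show i ≤ j from le_of_lt h2), if_pos h2] at hi
            exact absurd (hmin i h2) (by omega)
          · rw [if_neg h2, getD_of_length_le (l := y) (i := i+1) (by omega)] at hi
            split at hi <;> omega
        rw [dif_neg h', halen]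
        omega
    rw [Gmap]
    simp only
    rw [hgj]
    have e1 : b.take j = x.take j :=
      List.take_left' (by rw [List.length_take, hxl]; omega)
    have e2 : a.drop (j+1) = x.drop j :=
      List.drop_left' (by rw [List.length_take, hyl]; omega)
    have e3 : a.take (j+1) = y.take (j+1) :=
      List.take_left' (by rw [List.length_take, hyl]; omega)
    have e4 : b.drop j = y.drop (j+1) :=
      List.drop_left' (by rw [List.length_take, hxl]; omega)
    rw [e1, e2, e3, e4, List.take_append_drop, List.take_append_drop]

end Spec
section Spec2
open scoped Classical

variable {m s : ℕ}

lemma Gmap_spec {a b : List ℕ} (hs : 1 ≤ s) (ha : a ∈ Pk m (s+1)) (hb : b ∈ Pk m (s-1)) :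
    Gmap (a, b) ∈ Pk m s ×ˢ Pk m s ∧ ¬ Dom (Gmap (a, b)).1 (Gmap (a, b)).2 ∧
      Fmap (Gmap (a, b)) = (a, b) := by
  obtain ⟨has, hal, hab⟩ := mem_Pk.1 ha
  obtain ⟨hbs, hbl, hbb⟩ := mem_Pk.1 hb
  set j := (if h' : ∃ i, a.getD i 0 < b.getD i 0 then Nat.find h' else a.length - 2)
    with hjdef
  have hG : Gmap (a, b) = (b.take j ++ a.drop (j+1), a.take (j+1) ++ b.drop j) := by
    rw [Gmap]
  have hjle : j ≤ s - 1 := by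
    rw [hjdef]
    split
    · rename_i h'
      by_contra hc
      have hspec := Nat.find_spec h'
      rw [getD_of_length_le (l := b) (i := Nat.find h') (by omega)] at hspec
      omega
    · omega
  have hub : ∀ i < j, b.getD i 0 ≤ a.getD i 0 := by
    intro i hi
    rw [hjdef] at hi
    split at hi
    · rename_i h'
      exact not_lt.1 (Nat.find_min h' hi)
    · rename_i h'
      push_neg at h'
      exact h' i
  have hcrossj : a.getD j 0 < b.getD j 0 ∨ (j = s - 1 ∧ ∀ i, b.getD i 0 ≤ a.getD i 0) := by
    rw [hjdef]
    split
    · rename_i h'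
      exact Or.inl (Nat.find_spec h')
    · rename_i h'
      push_neg at h'
      exact Or.inr ⟨by omega, h'⟩
  set x := b.take j ++ a.drop (j+1) with hxdef
  set y := a.take (j+1) ++ b.drop j with hydef
  have hxlen : x.length = s := by
    rw [hxdef, List.length_append, List.length_take, List.length_drop, hal, hbl]; omega
  have hylen : y.length = s := by
    rw [hydef, List.length_append, List.length_take, List.length_drop, hal, hbl]; omega
  have hxD : ∀ i, x.getD i 0 = if i < j then b.getD i 0 else a.getD (i+1) 0 := by
    intro i
    rw [hxdef]
    by_cases hij : i < j
    · rw [if_pos hij, getD_append_left' (by rw [List.length_take, hbl]; omega),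
        getD_take' _ (by omega)]
    · rw [if_neg hij, getD_append_right' (by rw [List.length_take, hbl]; omega),
        List.length_take, hbl, getD_drop']
      congr 1; omega
  have hyD : ∀ i, y.getD i 0 = if i ≤ j then a.getD i 0 else b.getD (i-1) 0 := by
    intro i
    rw [hydef]
    by_cases hij : i ≤ j
    · rw [if_pos hij, getD_append_left' (by rw [List.length_take, hal]; omega),
        getD_take' _ (by omega)]
    · rw [if_neg hij, getD_append_right' (by rw [List.length_take, hal]; omega),
        List.length_take, hal, getD_drop']
      congr 1; omega
  have hxPk : x ∈ Pk m s := by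
    rw [mem_Pk]
    refine ⟨?_, hxlen, ?_⟩
    · rw [sorted_lt_iff_consec]
      intro i hi
      rw [hxD, hxD, hxlen] at *
      by_cases h1 : i + 1 < j
      · rw [if_pos (by omega), if_pos h1]
        exact sorted_lt_getD_lt hbs (by omega) (by omega)
      · by_cases h2 : i < j
        · rw [if_pos h2, if_neg h1]
          calc b.getD i 0 ≤ a.getD i 0 := hub i h2
            _ < a.getD (i+1+1) 0 := sorted_lt_getD_lt has (by omega) (by omega)
        · rw [if_neg h2, if_neg h1]
          exact sorted_lt_getD_lt has (by omega) (by omega)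
    · intro z hz
      rcases List.mem_append.1 hz with hz | hz
      · exact hbb z (List.mem_of_mem_take hz)
      · exact hab z (List.mem_of_mem_drop hz)
  have hyPk : y ∈ Pk m s := by
    rw [mem_Pk]
    refine ⟨?_, hylen, ?_⟩
    · rw [sorted_lt_iff_consec]
      intro i hi
      rw [hyD, hyD, hylen] at *
      by_cases h1 : i + 1 ≤ j
      · rw [if_pos (by omega), if_pos h1]
        exact sorted_lt_getD_lt has (by omega) (by omega)
      · by_cases h2 : i ≤ j
        · rw [if_pos h2, if_neg h1]
          have hij : i = j := by omega
          subst hij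
          rcases hcrossj with hc | ⟨hc, _⟩
          · simpa using hc
          · omega
        · rw [if_neg h2, if_neg h1]
          have : i - 1 + 1 = i := by omega
          rw [← this] at *
          exact sorted_lt_getD_lt hbs (by omega) (by omega)
    · intro z hz
      rcases List.mem_append.1 hz with hz | hz
      · exact hab z (List.mem_of_mem_take hz)
      · exact hbb z (List.mem_of_mem_drop hz)
  have hcross : ∃ i, y.getD i 0 < x.getD i 0 := by
    refine ⟨j, ?_⟩
    rw [hxD, hyD, if_neg (lt_irrefl j), if_pos (le_refl j)]
    exact sorted_lt_getD_lt has (by omega) (by omega)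
  have hfindj : Nat.find hcross = j := by
    rw [Nat.find_eq_iff]
    constructor
    · rw [hxD, hyD, if_neg (lt_irrefl j), if_pos (le_refl j)]
      exact sorted_lt_getD_lt has (by omega) (by omega)
    · intro i hi
      rw [hxD, hyD, if_pos hi, if_pos (le_of_lt hi), not_lt]
      exact hub i hi
  refine ⟨?_, ?_, ?_⟩
  · rw [hG]; exact Finset.mem_product.2 ⟨hxPk, hyPk⟩
  · rw [hG]
    intro hdom
    obtain ⟨i, hi⟩ := hcross
    exact absurd (hdom i) (not_le.2 hi)
  · rw [hG]
    show Fmap (x, y) = (a, b)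
    rw [Fmap, dif_pos hcross]
    simp only
    rw [hfindj]
    have e1 : y.take (j+1) = a.take (j+1) :=
      List.take_left' (by rw [List.length_take, hal]; omega)
    have e2 : x.drop j = a.drop (j+1) :=
      List.drop_left' (by rw [List.length_take, hbl]; omega)
    have e3 : x.take j = b.take j :=
      List.take_left' (by rw [List.length_take, hbl]; omega)
    have e4 : y.drop (j+1) = b.drop j :=
      List.drop_left' (by rw [List.length_take, hal]; omega)
    rw [e1, e2, e3, e4, List.take_append_drop, List.take_append_drop]

end Spec2
section Counting
open scoped Classical

variable (m s : ℕ)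

noncomputable def goodSet : Finset (List ℕ × List ℕ) :=
  ((Pk m s) ×ˢ (Pk m s)).filter (fun p => Dom p.1 p.2 ∨ Dom p.2 p.1)

lemma mem_goodSet {q : List ℕ × List ℕ} :
    q ∈ goodSet m s ↔ (q.1 ∈ Pk m s ∧ q.2 ∈ Pk m s) ∧ (Dom q.1 q.2 ∨ Dom q.2 q.1) := by
  unfold goodSet
  rw [Finset.mem_filter, Finset.mem_product]

lemma card_cross (hs : 1 ≤ s) :
    (((Pk m s) ×ˢ (Pk m s)).filter (fun p => ¬ Dom p.1 p.2)).card
      = m.choose (s+1) * m.choose (s-1) := by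
  rw [← card_Pk m (s+1), ← card_Pk m (s-1), ← Finset.card_product]
  apply Finset.card_bij (fun p _ => Fmap p)
  · rintro ⟨x, y⟩ hp
    rw [Finset.mem_filter, Finset.mem_product] at hp
    exact (Fmap_spec hs hp.1.1 hp.1.2 hp.2).1
  · rintro ⟨x1, y1⟩ h1 ⟨x2, y2⟩ h2 heq
    rw [Finset.mem_filter, Finset.mem_product] at h1 h2
    have e1 := (Fmap_spec hs h1.1.1 h1.1.2 h1.2).2
    have e2 := (Fmap_spec hs h2.1.1 h2.1.2 h2.2).2
    rw [← e1, ← e2, heq]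
  · rintro ⟨a, b⟩ hq
    rw [Finset.mem_product] at hq
    obtain ⟨hmem, hnd, hfg⟩ := Gmap_spec hs hq.1 hq.2
    refine ⟨Gmap (a, b), ?_, hfg⟩
    rw [Finset.mem_filter]
    exact ⟨hmem, hnd⟩

lemma card_dom_symm :
    (((Pk m s) ×ˢ (Pk m s)).filter (fun p => Dom p.2 p.1)).card
      = (((Pk m s) ×ˢ (Pk m s)).filter (fun p => Dom p.1 p.2)).card := by
  apply Finset.card_bij (fun p _ => (p.2, p.1))
  · rintro ⟨x, y⟩ hp
    rw [Finset.mem_filter, Finset.mem_product] at hp ⊢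
    exact ⟨⟨hp.1.2, hp.1.1⟩, hp.2⟩
  · rintro ⟨x1, y1⟩ _ ⟨x2, y2⟩ _ heq
    simpa [Prod.ext_iff, and_comm] using heq
  · rintro ⟨x, y⟩ hp
    rw [Finset.mem_filter, Finset.mem_product] at hp
    exact ⟨(y, x), by rw [Finset.mem_filter, Finset.mem_product]; exact ⟨⟨hp.1.2, hp.1.1⟩, hp.2⟩, rfl⟩

lemma card_dom_both :
    (((Pk m s) ×ˢ (Pk m s)).filter (fun p => Dom p.1 p.2 ∧ Dom p.2 p.1)).card
      = (Pk m s).card := by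
  apply Finset.card_bij (fun p _ => p.1)
  · rintro ⟨x, y⟩ hp
    rw [Finset.mem_filter, Finset.mem_product] at hp
    exact hp.1.1
  · rintro ⟨x1, y1⟩ h1 ⟨x2, y2⟩ h2 heq
    rw [Finset.mem_filter, Finset.mem_product] at h1 h2
    have e1 : x1 = y1 := dom_antisymm
      (by rw [(mem_Pk.1 h1.1.1).2.1, (mem_Pk.1 h1.1.2).2.1]) h1.2.1 h1.2.2
    have e2 : x2 = y2 := dom_antisymm
      (by rw [(mem_Pk.1 h2.1.1).2.1, (mem_Pk.1 h2.1.2).2.1]) h2.2.1 h2.2.2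
    simp only at heq
    rw [Prod.ext_iff]
    exact ⟨heq, by rw [← e1, ← e2, heq]⟩
  · intro x hx
    exact ⟨(x, x), by rw [Finset.mem_filter, Finset.mem_product]
                      exact ⟨⟨hx, hx⟩, fun i => le_refl _, fun i => le_refl _⟩, rfl⟩

/-- Main counting identity. -/
lemma card_goodSet (hs : 1 ≤ s) :
    (goodSet m s).card + 2 * (m.choose (s+1) * m.choose (s-1)) + m.choose s
      = 2 * (m.choose s)^2 := by
  classical
  have hand : ((Pk m s) ×ˢ (Pk m s)).filter (fun p => Dom p.1 p.2)
        ∩ ((Pk m s) ×ˢ (Pk m s)).filter (fun p => Dom p.2 p.1)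
      = ((Pk m s) ×ˢ (Pk m s)).filter (fun p => Dom p.1 p.2 ∧ Dom p.2 p.1) :=
    (Finset.filter_and _ _ _).symm
  have hu := Finset.card_union_add_card_inter
    (((Pk m s) ×ˢ (Pk m s)).filter (fun p => Dom p.1 p.2))
    (((Pk m s) ×ˢ (Pk m s)).filter (fun p => Dom p.2 p.1))
  rw [hand] at hu
  have hgood : (goodSet m s).card
      = (((Pk m s) ×ˢ (Pk m s)).filter (fun p => Dom p.1 p.2)
        ∪ ((Pk m s) ×ˢ (Pk m s)).filter (fun p => Dom p.2 p.1)).card := by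
    rw [goodSet, Finset.filter_or]
  have h2 : (((Pk m s) ×ˢ (Pk m s)).filter (fun p => Dom p.1 p.2)).card
      + (((Pk m s) ×ˢ (Pk m s)).filter (fun p => ¬ Dom p.1 p.2)).card = (m.choose s)^2 := by
    rw [Finset.card_filter_add_card_filter_not, Finset.card_product, card_Pk, sq]
  have h3 := card_cross m s hs
  have h4 := card_dom_symm m s
  have h5 := card_dom_both m s
  have h6 : (((Pk m s) ×ˢ (Pk m s)).filter (fun p => Dom p.1 p.2 ∧ Dom p.2 p.1)).card ≤
      (((Pk m s) ×ˢ (Pk m s)).filter (fun p => Dom p.1 p.2)).card :=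
    Finset.card_le_card (by
      intro q hq
      rw [Finset.mem_filter] at hq ⊢
      exact ⟨hq.1, hq.2.1⟩)
  rw [card_Pk] at h5
  omega

end Counting


lemma multiset_sum_sum (t : Finset ℕ) (f : ℕ → Multiset ℕ) :
    (∑ i ∈ t, f i).sum = ∑ i ∈ t, (f i).sum := by
  classical
  induction t using Finset.induction with
  | empty => simp
  | insert _ _ h ih => rw [Finset.sum_insert h, Finset.sum_insert h, Multiset.sum_add, ih]

lemma word_sorted (n : ℕ) (α : ℕ → ℕ) : (word n α).Pairwise (· ≤ ·) :=
  Multiset.pairwise_sort _ _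

lemma word_length {s n : ℕ} {α : ℕ → ℕ} (h : IsComp s n α) : (word n α).length = s := by
  unfold word
  rw [Multiset.length_sort]
  simp [h.2]

lemma word_mem_lt {n : ℕ} {α : ℕ → ℕ} {x : ℕ} (hx : x ∈ word n α) : x < n := by
  unfold word at hx
  rw [Multiset.mem_sort, Multiset.mem_sum] at hx
  obtain ⟨i, hi, hxi⟩ := hx
  rw [Multiset.eq_of_mem_replicate hxi]
  exact mem_range.1 hi

lemma word_count {n : ℕ} (α : ℕ → ℕ) {i : ℕ} (hi : i < n) : (word n α).count i = α i := by
  unfold word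
  rw [← Multiset.coe_count, Multiset.sort_eq, Multiset.count_sum']
  rw [Finset.sum_eq_single i]
  · simp [Multiset.count_replicate]
  · intro b _ hb; simp [Multiset.count_replicate, hb]
  · intro h; exact absurd (mem_range.2 hi) h

lemma word_sum {n : ℕ} (α : ℕ → ℕ) : (word n α).sum = weightedTotal n α := by
  unfold word weightedTotal
  rw [← Multiset.sum_coe, Multiset.sort_eq, multiset_sum_sum]
  simp [Multiset.sum_replicate, mul_comm]

lemma sort_coe_of_sorted {l : List ℕ} (h : l.Pairwise (· ≤ ·)) :
    (l : Multiset ℕ).sort (· ≤ ·) = l := by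
  apply List.Perm.eq_of_pairwise' (Multiset.pairwise_sort _ _) h
  exact Multiset.coe_eq_coe.mp (by rw [Multiset.sort_eq])

/-- the composition reconstructed from a list -/
def compOf (n : ℕ) (l : List ℕ) : ℕ → ℕ := fun i => if i < n then l.count i else 0

/-- reconstruction : the word of the "count composition" of a sorted bounded list. -/
lemma word_of_sorted {n : ℕ} {l : List ℕ} (hl : l.Pairwise (· ≤ ·)) (hb : ∀ x ∈ l, x < n) :
    word n (compOf n l) = l := by
  have hsub : l.toFinset ⊆ Finset.range n :=
    fun x hx => mem_range.2 (hb x (List.mem_toFinset.1 hx))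
  have key : ((Finset.range n).sum fun i =>
      Multiset.replicate (compOf n l i) i) = (l : Multiset ℕ) := by
    have h1 : ∀ i ∈ Finset.range n,
        Multiset.replicate (compOf n l i) i
          = Multiset.count i (l : Multiset ℕ) • ({i} : Multiset ℕ) := by
      intro i hi
      rw [show compOf n l i = l.count i from if_pos (mem_range.1 hi)]
      simp [Multiset.replicate, Multiset.nsmul_singleton, Multiset.coe_count]
    rw [Finset.sum_congr rfl h1,
      ← Finset.sum_subset hsub (fun x _ hx => by
        simp [List.count_eq_zero_of_not_mem (fun h => hx (List.mem_toFinset.2 h)),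
          Multiset.coe_count])]
    exact Multiset.toFinset_sum_count_nsmul_eq _
  unfold word
  rw [key]
  exact sort_coe_of_sorted hl

lemma isComp_compOf {s n : ℕ} {l : List ℕ} (hlen : l.length = s) (hb : ∀ x ∈ l, x < n) :
    IsComp s n (compOf n l) := by
  have hsub : l.toFinset ⊆ Finset.range n :=
    fun x hx => mem_range.2 (hb x (List.mem_toFinset.1 hx))
  constructor
  · intro i hi; simp [compOf, Nat.not_lt.2 hi]
  · unfold compOf
    rw [Finset.sum_congr rfl (fun i hi => if_pos (mem_range.1 hi)),
      ← Finset.sum_subset hsub (fun x _ hx =>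
        List.count_eq_zero_of_not_mem (fun h => hx (List.mem_toFinset.2 h))), ← hlen]
    have := Multiset.toFinset_sum_count_eq (l : Multiset ℕ)
    simpa [Multiset.coe_count] using this


lemma abs_sum_eq_iff {s : ℕ} {f : ℕ → ℤ} :
    (∑ j ∈ range s, |f j|) = |∑ j ∈ range s, f j| ↔
      (∀ j < s, 0 ≤ f j) ∨ (∀ j < s, f j ≤ 0) := by
  classical
  constructor
  · intro h
    by_contra hc
    push_neg at hc
    obtain ⟨⟨i, his, hineg⟩, ⟨k, hks, hkpos⟩⟩ := hc
    set t := range s with ht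
    have hsplit : ∑ j ∈ t, |f j| =
        (∑ j ∈ t.filter (fun j => 0 ≤ f j), f j) +
        (∑ j ∈ t.filter (fun j => ¬ 0 ≤ f j), (- f j)) := by
      rw [← Finset.sum_filter_add_sum_filter_not t (fun j => 0 ≤ f j) (fun j => |f j|)]
      congr 1
      · exact Finset.sum_congr rfl (fun j hj => abs_of_nonneg (mem_filter.1 hj).2)
      · exact Finset.sum_congr rfl (fun j hj =>
          abs_of_neg (not_le.1 (mem_filter.1 hj).2))
    have hfsplit : ∑ j ∈ t, f j =
        (∑ j ∈ t.filter (fun j => 0 ≤ f j), f j) -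
        (∑ j ∈ t.filter (fun j => ¬ 0 ≤ f j), (- f j)) := by
      rw [← Finset.sum_filter_add_sum_filter_not t (fun j => 0 ≤ f j) f]
      simp
    set P := ∑ j ∈ t.filter (fun j => 0 ≤ f j), f j with hP
    set N := ∑ j ∈ t.filter (fun j => ¬ 0 ≤ f j), (- f j) with hN
    have hPpos : 0 < P := by
      apply lt_of_lt_of_le hkpos
      apply Finset.single_le_sum (f := f) (fun j hj => (mem_filter.1 hj).2)
      exact mem_filter.2 ⟨mem_range.2 hks, le_of_lt hkpos⟩
    have hNpos : 0 < N := by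
      apply lt_of_lt_of_le (show (0:ℤ) < - f i by omega)
      apply Finset.single_le_sum (f := fun j => - f j)
        (fun j hj => show (0:ℤ) ≤ - f j from by have := (mem_filter.1 hj).2; omega)
      exact mem_filter.2 ⟨mem_range.2 his, by omega⟩
    rw [hsplit, hfsplit] at h
    have hlt : |P - N| < P + N := abs_sub_lt_iff.2 ⟨by omega, by omega⟩
    omega
  · rintro (h | h)
    · rw [abs_of_nonneg (Finset.sum_nonneg (fun j hj => h j (mem_range.1 hj)))]
      exact Finset.sum_congr rfl (fun j hj => abs_of_nonneg (h j (mem_range.1 hj)))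
    · rw [abs_of_nonpos (Finset.sum_nonpos (fun j hj => h j (mem_range.1 hj)))]
      rw [← Finset.sum_neg_distrib]
      exact Finset.sum_congr rfl (fun j hj => abs_of_nonpos (h j (mem_range.1 hj)))

section Bridge
open scoped Classical

lemma ascFactorial_prod (s k : ℕ) : (s+1).ascFactorial k = ∏ i ∈ Finset.range k, (s+1+i) := by
  induction k with
  | zero => simp
  | succ j ih => rw [Nat.ascFactorial_succ, Finset.prod_range_succ, ih]; ring

lemma list_getD_sum (l : List ℕ) : ∑ j ∈ Finset.range l.length, l.getD j 0 = l.sum := by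
  induction l with
  | nil => simp
  | cons h t ih =>
      rw [List.length_cons, Finset.sum_range_succ']
      simp only [List.getD_cons_succ, List.getD_cons_zero, List.sum_cons]
      rw [ih]; ring

lemma sorted_le_getD_le {l : List ℕ} (hl : l.Pairwise (· ≤ ·)) {i j : ℕ}
    (hij : i ≤ j) (hj : j < l.length) : l.getD i 0 ≤ l.getD j 0 := by
  rcases eq_or_lt_of_le hij with rfl | h
  · exact le_refl _
  · rw [List.getD_eq_getElem _ _ (lt_trans h hj), List.getD_eq_getElem _ _ hj]
    exact List.pairwise_iff_getElem.1 hl i j (lt_trans h hj) hj h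

lemma sorted_lt_getD_ge {l : List ℕ} (hl : l.Pairwise (· < ·)) :
    ∀ j, j < l.length → j ≤ l.getD j 0 := by
  intro j
  induction j with
  | zero => intro _; exact Nat.zero_le _
  | succ k ih =>
      intro hk
      have h1 := ih (by omega)
      have h2 := sorted_lt_getD_lt hl (Nat.lt_succ_self k) hk
      simp only [Nat.succ_eq_add_one] at *
      omega

lemma sorted_lt_getD_upper {l : List ℕ} (hl : l.Pairwise (· < ·)) :
    ∀ d j, j + d < l.length → l.getD j 0 + d ≤ l.getD (j+d) 0 := by
  intro d
  induction d with
  | zero => intro j _; simp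
  | succ k ih =>
      intro j h
      have h1 := ih j (by omega)
      have h2 := sorted_lt_getD_lt hl (show j + k < j + (k+1) by omega) (by omega)
      omega

lemma getD_mapIdx (f : ℕ → ℕ → ℕ) (l : List ℕ) {i : ℕ} (h : i < l.length) :
    (l.mapIdx f).getD i 0 = f i (l.getD i 0) := by
  rw [List.getD_eq_getElem _ _ (by rw [List.length_mapIdx]; exact h),
    List.getElem_mapIdx, List.getD_eq_getElem _ _ h]

def shiftW (n : ℕ) (α : ℕ → ℕ) : List ℕ := (word n α).mapIdx (fun j w => w + j)

def unshift (l : List ℕ) : List ℕ := l.mapIdx (fun j w => w - j)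

variable {s n : ℕ}

lemma shiftW_mem (hn : 1 ≤ n) (hs : 1 ≤ s) {α : ℕ → ℕ} (hα : IsComp s n α) :
    shiftW n α ∈ Pk (s+n-1) s := by
  have hlen : (shiftW n α).length = s := by
    rw [shiftW, List.length_mapIdx, word_length hα]
  rw [mem_Pk]
  refine ⟨?_, hlen, ?_⟩
  · rw [sorted_lt_iff_consec]
    intro i hi
    rw [hlen] at hi
    rw [shiftW, getD_mapIdx _ _ (by rw [word_length hα]; omega),
      getD_mapIdx _ _ (by rw [word_length hα]; omega)]
    have := sorted_le_getD_le (word_sorted n α) (show i ≤ i+1 by omega)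
      (by rw [word_length hα]; omega)
    omega
  · intro z hz
    rw [List.mem_iff_getElem] at hz
    obtain ⟨i, hilen, rfl⟩ := hz
    rw [hlen] at hilen
    rw [show (shiftW n α)[i] = (shiftW n α).getD i 0 from
      (List.getD_eq_getElem _ _ (by rw [hlen]; omega)).symm]
    rw [shiftW, getD_mapIdx _ _ (by rw [word_length hα]; omega)]
    have h1 : (word n α).getD i 0 < n :=
      word_mem_lt (getD_mem (by rw [word_length hα]; omega))
    omega

lemma unshift_shiftW {α : ℕ → ℕ} : unshift (shiftW n α) = word n α := by
  apply list_ext_getD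
  · rw [unshift, shiftW, List.length_mapIdx, List.length_mapIdx]
  · intro i
    by_cases hi : i < (word n α).length
    · rw [unshift, getD_mapIdx _ _ (by rw [shiftW, List.length_mapIdx]; exact hi),
        shiftW, getD_mapIdx _ _ hi]
      omega
    · rw [getD_of_length_le (by rw [unshift, shiftW, List.length_mapIdx, List.length_mapIdx]; omega),
        getD_of_length_le (by omega)]

lemma comp_recover {α : ℕ → ℕ} (hα : IsComp s n α) : compOf n (word n α) = α := by
  funext i
  by_cases hi : i < n
  · rw [compOf]
    simp only [if_pos hi]
    exact word_count α hi
  · rw [compOf]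
    simp only [if_neg hi]
    exact (hα.1 i (by omega)).symm

lemma unshift_spec (hn : 1 ≤ n) (hs : 1 ≤ s) {l : List ℕ} (hl : l ∈ Pk (s+n-1) s) :
    (unshift l).Pairwise (· ≤ ·) ∧ (unshift l).length = s ∧ (∀ x ∈ unshift l, x < n) := by
  obtain ⟨hsort, hlen, hb⟩ := mem_Pk.1 hl
  have hge : ∀ j < s, j ≤ l.getD j 0 := by
    intro j hj; exact sorted_lt_getD_ge hsort j (by omega)
  have hup : ∀ j < s, l.getD j 0 < n + j := by
    intro j hj
    have h1 := sorted_lt_getD_upper hsort (s-1-j) j (by omega)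
    have h2 : l.getD (j + (s-1-j)) 0 < s+n-1 := by
      apply Pk_getD_lt hl; omega
    omega
  have hulen : (unshift l).length = s := by rw [unshift, List.length_mapIdx]; omega
  refine ⟨?_, hulen, ?_⟩
  · rw [← List.isChain_iff_pairwise, List.isChain_iff_getElem]
    intro i hi
    rw [hulen] at hi
    have g1 : (unshift l)[i]'(by omega) = (unshift l).getD i 0 :=
      (List.getD_eq_getElem _ _ (by omega)).symm
    have g2 : (unshift l)[i+1]'(by omega) = (unshift l).getD (i+1) 0 :=
      (List.getD_eq_getElem _ _ (by omega)).symm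
    rw [g1, g2, unshift, getD_mapIdx _ _ (by omega), getD_mapIdx _ _ (by omega)]
    have := sorted_lt_getD_lt hsort (show i < i+1 by omega) (show i+1 < l.length by omega)
    have := hge i (by omega)
    omega
  · intro x hx
    rw [List.mem_iff_getElem] at hx
    obtain ⟨i, hilen, rfl⟩ := hx
    rw [hulen] at hilen
    rw [show (unshift l)[i] = (unshift l).getD i 0 from
      (List.getD_eq_getElem _ _ (by rw [hulen]; omega)).symm]
    rw [unshift, getD_mapIdx _ _ (by omega)]
    have := hup i hilen
    omega

lemma shiftW_unshift (hn : 1 ≤ n) (hs : 1 ≤ s) {l : List ℕ} (hl : l ∈ Pk (s+n-1) s) :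
    shiftW n (compOf n (unshift l)) = l := by
  obtain ⟨hsort, hlen, hb⟩ := mem_Pk.1 hl
  obtain ⟨husort, hulen, hub⟩ := unshift_spec hn hs hl
  have hword : word n (compOf n (unshift l)) = unshift l := word_of_sorted husort hub
  rw [shiftW, hword]
  apply list_ext_getD
  · rw [List.length_mapIdx]; omega
  · intro i
    by_cases hi : i < s
    · rw [getD_mapIdx _ _ (by omega), unshift, getD_mapIdx _ _ (by omega)]
      have := sorted_lt_getD_ge hsort i (by omega)
      omega
    · rw [getD_of_length_le (by rw [List.length_mapIdx]; omega),
        getD_of_length_le (by omega)]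

lemma isComp_unshift (hn : 1 ≤ n) (hs : 1 ≤ s) {l : List ℕ} (hl : l ∈ Pk (s+n-1) s) :
    IsComp s n (compOf n (unshift l)) := by
  obtain ⟨husort, hulen, hub⟩ := unshift_spec hn hs hl
  exact isComp_compOf hulen hub

noncomputable def compEquiv (hn : 1 ≤ n) (hs : 1 ≤ s) :
    {α : ℕ → ℕ // IsComp s n α} ≃ {l : List ℕ // l ∈ Pk (s+n-1) s} where
  toFun := fun p => ⟨shiftW n p.1, shiftW_mem hn hs p.2⟩
  invFun := fun q => ⟨compOf n (unshift q.1), isComp_unshift hn hs q.2⟩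
  left_inv := fun p => by
    apply Subtype.ext
    simp only
    rw [unshift_shiftW, comp_recover p.2]
  right_inv := fun q => by
    apply Subtype.ext
    simp only
    rw [shiftW_unshift hn hs q.2]

lemma dom_shiftW_iff {α β : ℕ → ℕ} (hα : IsComp s n α) (hβ : IsComp s n β) :
    Dom (shiftW n α) (shiftW n β) ↔ ∀ j < s, (word n α).getD j 0 ≤ (word n β).getD j 0 := by
  constructor
  · intro h j hj
    have := h j
    rw [shiftW, shiftW, getD_mapIdx _ _ (by rw [word_length hα]; omega),
      getD_mapIdx _ _ (by rw [word_length hβ]; omega)] at this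
    omega
  · intro h j
    by_cases hj : j < s
    · rw [shiftW, shiftW, getD_mapIdx _ _ (by rw [word_length hα]; omega),
        getD_mapIdx _ _ (by rw [word_length hβ]; omega)]
      have := h j hj
      omega
    · rw [getD_of_length_le (by rw [shiftW, List.length_mapIdx, word_length hα]; omega),
        getD_of_length_le (by rw [shiftW, List.length_mapIdx, word_length hβ]; omega)]

lemma emd_iff_dom {α β : ℕ → ℕ} (hα : IsComp s n α) (hβ : IsComp s n β) :
    (emd s n α β = ((weightedTotal n α : ℤ) - (weightedTotal n β : ℤ)).natAbs)
      ↔ (Dom (shiftW n α) (shiftW n β) ∨ Dom (shiftW n β) (shiftW n α)) := by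
  have hsum : ∀ (γ : ℕ → ℕ), IsComp s n γ →
      ∑ j ∈ Finset.range s, ((word n γ).getD j 0 : ℤ) = (weightedTotal n γ : ℤ) := by
    intro γ hγ
    rw [← word_sum (n := n) γ, ← word_length hγ, ← list_getD_sum]
    push_cast
    rfl
  set f : ℕ → ℤ := fun j => ((word n α).getD j 0 : ℤ) - ((word n β).getD j 0 : ℤ) with hf
  have h1 : emd s n α β = ∑ j ∈ Finset.range s, (f j).natAbs := rfl
  have h2 : ((weightedTotal n α : ℤ) - (weightedTotal n β : ℤ)).natAbs
      = (∑ j ∈ Finset.range s, f j).natAbs := by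
    rw [hf, Finset.sum_sub_distrib, hsum α hα, hsum β hβ]
  rw [h1, h2]
  have h3 : (∑ j ∈ Finset.range s, (f j).natAbs = (∑ j ∈ Finset.range s, f j).natAbs)
      ↔ ((∑ j ∈ Finset.range s, |f j|) = |∑ j ∈ Finset.range s, f j|) := by
    constructor
    · intro h
      have := congrArg (fun t : ℕ => (t : ℤ)) h
      simp only [Nat.cast_sum, Int.natCast_natAbs] at this
      exact this
    · intro h
      have : ((∑ j ∈ Finset.range s, (f j).natAbs : ℕ) : ℤ)
          = (((∑ j ∈ Finset.range s, f j).natAbs : ℕ) : ℤ) := by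
        push_cast [Int.natCast_natAbs]
        exact h
      exact_mod_cast this
  rw [h3, abs_sum_eq_iff, dom_shiftW_iff hα hβ, dom_shiftW_iff hβ hα]
  have e1 : (∀ j < s, 0 ≤ f j) ↔ ∀ j < s, (word n β).getD j 0 ≤ (word n α).getD j 0 := by
    constructor <;> intro h j hj <;> have := h j hj <;> [skip; skip] <;>
      simp only [hf, sub_nonneg] at * <;> exact_mod_cast this
  have e2 : (∀ j < s, f j ≤ 0) ↔ ∀ j < s, (word n α).getD j 0 ≤ (word n β).getD j 0 := by
    constructor <;> intro h j hj <;> have := h j hj <;> [skip; skip] <;>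
      simp only [hf, sub_nonpos] at * <;> exact_mod_cast this
  rw [e1, e2]
  tauto

end Bridge

lemma isComp_zero_iff {n : ℕ} {α : ℕ → ℕ} : IsComp 0 n α ↔ α = fun _ => 0 := by
  constructor
  · intro h
    funext i
    by_cases hi : i < n
    · exact Finset.sum_eq_zero_iff.1 h.2 i (Finset.mem_range.2 hi)
    · exact h.1 i (by omega)
  · rintro rfl
    exact ⟨fun _ _ => rfl, by simp⟩

/-- The proportion of ordered pairs `(α,β) ∈ C(s,n) × C(s,n)` for which the earth mover's
distance equals the absolute weighted difference `|T(α) − T(β)|` is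
`2(s+n)/(n(s+1)) − (n-1)!/((s+1)(s+2)⋯(s+n-1))`. -/
theorem proportion_emd_eq_weighted_difference (s n : ℕ) (hn : 1 ≤ n) :
    (Nat.card {p : (ℕ → ℕ) × (ℕ → ℕ) //
        IsComp s n p.1 ∧ IsComp s n p.2 ∧
          emd s n p.1 p.2
            = ((weightedTotal n p.1 : ℤ) - (weightedTotal n p.2 : ℤ)).natAbs} : ℚ)
      / ((Nat.card {α : ℕ → ℕ // IsComp s n α} : ℚ)) ^ 2
    = 2 * ((s : ℚ) + n) / ((n : ℚ) * ((s : ℚ) + 1))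
        - ((n - 1).factorial : ℚ) / ∏ i ∈ Finset.range (n - 1), ((s : ℚ) + 1 + i) := by
  classical
  have hn0 : (n : ℚ) ≠ 0 := Nat.cast_ne_zero.2 (by omega)
  rcases Nat.eq_zero_or_pos s with rfl | hs
  · -- s = 0 case
    have e1 : Nat.card {p : (ℕ → ℕ) × (ℕ → ℕ) //
        IsComp 0 n p.1 ∧ IsComp 0 n p.2 ∧
          emd 0 n p.1 p.2
            = ((weightedTotal n p.1 : ℤ) - (weightedTotal n p.2 : ℤ)).natAbs} = 1 := by
      rw [Nat.card_eq_one_iff_unique]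
      constructor
      · constructor
        rintro ⟨⟨α₁, β₁⟩, h1⟩ ⟨⟨α₂, β₂⟩, h2⟩
        apply Subtype.ext
        simp only [Prod.mk.injEq]
        have g1 : α₁ = fun _ => 0 := isComp_zero_iff.1 h1.1
        have g2 : β₁ = fun _ => 0 := isComp_zero_iff.1 h1.2.1
        have g3 : α₂ = fun _ => 0 := isComp_zero_iff.1 h2.1
        have g4 : β₂ = fun _ => 0 := isComp_zero_iff.1 h2.2.1
        exact ⟨g1.trans g3.symm, g2.trans g4.symm⟩
      · refine ⟨⟨(fun _ => 0, fun _ => 0), ?_, ?_, ?_⟩⟩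
        · exact isComp_zero_iff.2 rfl
        · exact isComp_zero_iff.2 rfl
        · simp [emd, weightedTotal]
    have e2 : Nat.card {α : ℕ → ℕ // IsComp 0 n α} = 1 := by
      rw [Nat.card_eq_one_iff_unique]
      constructor
      · constructor
        rintro ⟨α₁, h1⟩ ⟨α₂, h2⟩
        apply Subtype.ext
        show α₁ = α₂
        rw [isComp_zero_iff.1 h1, isComp_zero_iff.1 h2]
      · exact ⟨⟨fun _ => 0, isComp_zero_iff.2 rfl⟩⟩
    rw [e1, e2]
    have hprod : ∏ i ∈ Finset.range (n - 1), (((0:ℕ) : ℚ) + 1 + i)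
        = ((n-1).factorial : ℚ) := by
      rw [← Finset.prod_range_add_one_eq_factorial (n-1)]
      push_cast
      apply Finset.prod_congr rfl
      intro i _
      ring
    rw [hprod]
    have hfac : ((n-1).factorial : ℚ) ≠ 0 := Nat.cast_ne_zero.2 (Nat.factorial_ne_zero _)
    push_cast
    field_simp
    ring
  · -- s ≥ 1 case
    set m := s + n - 1 with hm
    have hsm : s ≤ m := by omega
    -- numerator
    have hnum : Nat.card {p : (ℕ → ℕ) × (ℕ → ℕ) //
        IsComp s n p.1 ∧ IsComp s n p.2 ∧
          emd s n p.1 p.2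
            = ((weightedTotal n p.1 : ℤ) - (weightedTotal n p.2 : ℤ)).natAbs}
        = (goodSet m s).card := by
      rw [← Nat.card_eq_finsetCard]
      apply Nat.card_congr
      refine ⟨fun p => ⟨(shiftW n p.1.1, shiftW n p.1.2), ?_⟩,
              fun q => ⟨(compOf n (unshift q.1.1), compOf n (unshift q.1.2)), ?_⟩, ?_, ?_⟩
      · rw [mem_goodSet]
        exact ⟨⟨shiftW_mem hn hs p.2.1, shiftW_mem hn hs p.2.2.1⟩,
          (emd_iff_dom p.2.1 p.2.2.1).1 p.2.2.2⟩
      · have hq := q.2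
        rw [mem_goodSet] at hq
        have hc1 := isComp_unshift hn hs hq.1.1
        have hc2 := isComp_unshift hn hs hq.1.2
        refine ⟨hc1, hc2, (emd_iff_dom hc1 hc2).2 ?_⟩
        rw [shiftW_unshift hn hs hq.1.1, shiftW_unshift hn hs hq.1.2]
        exact hq.2
      · rintro ⟨⟨α, β⟩, hp⟩
        apply Subtype.ext
        simp only [Prod.mk.injEq]
        constructor
        · rw [unshift_shiftW, comp_recover hp.1]
        · rw [unshift_shiftW, comp_recover hp.2.1]
      · rintro ⟨⟨l₁, l₂⟩, hq⟩
        rw [mem_goodSet] at hq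
        apply Subtype.ext
        simp only [Prod.mk.injEq]
        exact ⟨shiftW_unshift hn hs hq.1.1, shiftW_unshift hn hs hq.1.2⟩
    -- denominator
    have hden : Nat.card {α : ℕ → ℕ // IsComp s n α} = m.choose s := by
      rw [← card_Pk m s, ← Nat.card_eq_finsetCard]
      exact Nat.card_congr (compEquiv hn hs)
    rw [hnum, hden]
    -- counting identity
    have hcount := card_goodSet m s hs
    -- binomial identities
    have f1 : m.choose s * s = m.choose (s-1) * n := by
      have h := Nat.choose_succ_right_eq m (s-1)
      rw [show s - 1 + 1 = s by omega, show m - (s-1) = n by omega] at h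
      exact h
    have f2 : m.choose (s+1) * (s+1) = m.choose s * (n-1) := by
      have h := Nat.choose_succ_right_eq m s
      rw [show m - s = n - 1 by omega] at h
      exact h
    have f3 : m.choose s * (n-1).factorial = ∏ i ∈ Finset.range (n-1), (s+1+i) := by
      have h1 : m.choose s * (n-1).factorial * s.factorial = m.factorial := by
        have := Nat.choose_mul_factorial_mul_factorial hsm
        rw [show m - s = n - 1 by omega] at this
        calc m.choose s * (n-1).factorial * s.factorial
            = m.choose s * s.factorial * (n-1).factorial := by ring
          _ = m.factorial := this
      have h2 : (∏ i ∈ Finset.range (n-1), (s+1+i)) * s.factorial = m.factorial := by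
        rw [← ascFactorial_prod]
        have := Nat.factorial_mul_ascFactorial s (n-1)
        rw [show s + (n-1) = m by omega] at this
        rw [mul_comm]
        exact this
      have hs0 : 0 < s.factorial := Nat.factorial_pos _
      exact Nat.eq_of_mul_eq_mul_right hs0 (h1.trans h2.symm)
    -- move to ℚ
    have hC0 : ((m.choose s : ℚ)) ≠ 0 := Nat.cast_ne_zero.2 (Nat.choose_pos hsm).ne'
    have hs1 : (s : ℚ) + 1 ≠ 0 := by positivity
    have hfac0 : (((n-1).factorial : ℕ) : ℚ) ≠ 0 :=
      Nat.cast_ne_zero.2 (Nat.factorial_ne_zero _)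
    have hGq : ((goodSet m s).card : ℚ) + 2*((m.choose (s+1) : ℚ)*(m.choose (s-1) : ℚ))
        + (m.choose s : ℚ) = 2*(m.choose s : ℚ)^2 := by exact_mod_cast hcount
    have f1q : (m.choose s : ℚ) * s = (m.choose (s-1) : ℚ) * n := by exact_mod_cast f1
    have f2q : (m.choose (s+1) : ℚ) * ((s:ℚ)+1) = (m.choose s : ℚ) * ((n:ℚ) - 1) := by
      have := congrArg (fun t : ℕ => (t:ℚ)) f2
      push_cast [Nat.cast_sub hn] at this
      convert this using 1
    have f3q : (m.choose s : ℚ) * (((n-1).factorial : ℕ) : ℚ)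
        = ∏ i ∈ Finset.range (n-1), ((s:ℚ)+1+i) := by
      have := congrArg (fun t : ℕ => (t:ℚ)) f3
      push_cast at this
      convert this using 1
    rw [← f3q]
    field_simp
    linear_combination ((n : ℚ) * ((s:ℚ)+1)) * hGq
      + (2 * (m.choose s : ℚ) * ((n:ℚ)-1)) * f1q
      - (2 * (m.choose (s-1) : ℚ) * (n:ℚ)) * f2q
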